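/- For α > 0, n ≥ 0 and 0 ≤ j < 2^n: f_α((2j+1)/2^{n+1}) = (1/2)[f_α(j/2^n) + f_α((j+1)/2^n)] + 2^{-αn}. -/

import Mathlib

/-- The tent map `φ(x) = 2 inf{|x-n| : n ∈ ℤ}`. -/
noncomputable def tent (x : ℝ) : ℝ := 2 * ⨅ n : ℤ, |x - (n:ℝ)|

/-- `f_α(x) = ∑_{j=0}^∞ 2^{-αj} φ(2^j x)`. -/
noncomputable def takagi (α x : ℝ) : ℝ :=
  ∑' j : ℕ, (1 / (2:ℝ) ^ (α * (j:ℝ))) * tent ((2:ℝ) ^ (j:ℕ) * x)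

lemma iInf_abs_sub (x : ℝ) : (⨅ n : ℤ, |x - (n:ℝ)|) = |x - round x| := by
  apply le_antisymm
  · exact ciInf_le ⟨0, by rintro y ⟨n, rfl⟩; exact abs_nonneg _⟩ (round x)
  · apply le_ciInf
    intro n
    rcases eq_or_ne n (round x) with rfl | h
    · exact le_refl _
    · have h1 : |x - round x| ≤ 1/2 := abs_sub_round x
      have h2 : (1:ℝ) ≤ |(n:ℝ) - (round x : ℝ)| := by
        rw [← Int.cast_sub, ← Int.cast_abs]
        exact_mod_cast Int.one_le_abs (sub_ne_zero.mpr h)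
      have h3 : |(n:ℝ) - (round x:ℝ)| ≤ |(n:ℝ) - x| + |x - (round x:ℝ)| := abs_sub_le _ _ _
      have h4 : |x - (n:ℝ)| = |(n:ℝ) - x| := abs_sub_comm _ _
      linarith

lemma tent_eq (x : ℝ) : tent x = 2 * |x - round x| := by rw [tent, iInf_abs_sub]

lemma tent_lower (m : ℤ) (x : ℝ) (h1 : (m:ℝ) ≤ x) (h2 : x ≤ m + 1/2) :
    tent x = 2 * (x - m) := by
  rw [tent_eq]
  congr 1
  rcases eq_or_lt_of_le h2 with heq | hlt
  · have hr : round x = m + 1 := by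
      rw [round_eq, heq]
      have : (m:ℝ) + 1/2 + 1/2 = ((m+1 : ℤ) : ℝ) := by push_cast; ring
      rw [this, Int.floor_intCast]
    rw [hr, heq]
    push_cast
    rw [abs_of_nonpos (by linarith)]
    ring
  · have hr : round x = m := by
      rw [round_eq]
      apply Int.floor_eq_iff.mpr
      constructor <;> push_cast <;> linarith
    rw [hr, abs_of_nonneg (by linarith)]

lemma tent_upper (m : ℤ) (x : ℝ) (h1 : (m:ℝ) + 1/2 ≤ x) (h2 : x ≤ m + 1) :
    tent x = 2 * ((m + 1) - x) := by
  rw [tent_eq]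
  congr 1
  have hr : round x = m + 1 := by
    rw [round_eq]
    apply Int.floor_eq_iff.mpr
    constructor <;> push_cast <;> linarith
  rw [hr]
  push_cast
  rw [abs_of_nonpos (by linarith)]
  ring

lemma tent_int (m : ℤ) : tent (m:ℝ) = 0 := by
  rw [tent_lower m (m:ℝ) le_rfl (by linarith)]; ring

lemma tent_nat (m : ℕ) : tent (m:ℝ) = 0 := by
  have := tent_int (m:ℤ); push_cast at this; exact this

lemma tent_midhalf (s : ℤ) (a b : ℝ) (ha : (s:ℝ)/2 ≤ a) (hab : a ≤ b)
    (hb : b ≤ ((s:ℝ)+1)/2) : tent ((a+b)/2) = (tent a + tent b)/2 := by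
  rcases Int.even_or_odd s with ⟨m, rfl⟩ | ⟨m, rfl⟩
  · have hm : ((m + m : ℤ) : ℝ) = 2*(m:ℝ) := by push_cast; ring
    rw [hm] at ha hb
    rw [tent_lower m a (by linarith) (by linarith),
        tent_lower m b (by linarith) (by linarith),
        tent_lower m ((a+b)/2) (by linarith) (by linarith)]
    ring
  · have hm : ((2*m + 1 : ℤ) : ℝ) = 2*(m:ℝ)+1 := by push_cast; ring
    rw [hm] at ha hb
    rw [tent_upper m a (by linarith) (by linarith),
        tent_upper m b (by linarith) (by linarith),
        tent_upper m ((a+b)/2) (by linarith) (by linarith)]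
    ring

theorem takagi_midpoint (α : ℝ) (hα : 0 < α) (n j : ℕ) (hj : j < 2 ^ n) :
    takagi α ((2 * (j:ℝ) + 1) / 2 ^ (n + 1))
      = (1 / 2) * (takagi α ((j:ℝ) / 2 ^ n) + takagi α (((j:ℝ) + 1) / 2 ^ n))
        + 1 / (2:ℝ) ^ (α * (n:ℝ)) := by
  have hx : takagi α ((2 * (j:ℝ) + 1) / 2 ^ (n + 1))
      = ∑ k ∈ Finset.range (n+1),
          (1 / (2:ℝ) ^ (α * (k:ℝ))) * tent ((2:ℝ) ^ (k:ℕ) * ((2 * (j:ℝ) + 1) / 2 ^ (n + 1))) := by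
    apply tsum_eq_sum
    intro k hk
    simp only [Finset.mem_range, not_lt] at hk
    obtain ⟨t, rfl⟩ : ∃ t, k = (n+1)+t := ⟨k-(n+1), by omega⟩
    have harg : (2:ℝ) ^ ((n+1)+t) * ((2 * (j:ℝ) + 1) / 2 ^ (n + 1))
        = ((2^t * (2*j+1) : ℕ) : ℝ) := by
      push_cast
      rw [pow_add]
      have h2 : (2:ℝ) ^ (n+1) ≠ 0 := by positivity
      field_simp
    rw [harg, tent_nat, mul_zero]
  have hy0 : takagi α ((j:ℝ) / 2 ^ n)
      = ∑ k ∈ Finset.range (n+1),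
          (1 / (2:ℝ) ^ (α * (k:ℝ))) * tent ((2:ℝ) ^ (k:ℕ) * ((j:ℝ) / 2 ^ n)) := by
    apply tsum_eq_sum
    intro k hk
    simp only [Finset.mem_range, not_lt] at hk
    obtain ⟨t, rfl⟩ : ∃ t, k = n+(1+t) := ⟨k-(n+1), by omega⟩
    have harg : (2:ℝ) ^ (n+(1+t)) * ((j:ℝ) / 2 ^ n) = ((2^(1+t) * j : ℕ) : ℝ) := by
      push_cast
      rw [pow_add]
      have h2 : (2:ℝ) ^ n ≠ 0 := by positivity
      field_simp
    rw [harg, tent_nat, mul_zero]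
  have hy1 : takagi α (((j:ℝ)+1) / 2 ^ n)
      = ∑ k ∈ Finset.range (n+1),
          (1 / (2:ℝ) ^ (α * (k:ℝ))) * tent ((2:ℝ) ^ (k:ℕ) * (((j:ℝ)+1) / 2 ^ n)) := by
    apply tsum_eq_sum
    intro k hk
    simp only [Finset.mem_range, not_lt] at hk
    obtain ⟨t, rfl⟩ : ∃ t, k = n+(1+t) := ⟨k-(n+1), by omega⟩
    have harg : (2:ℝ) ^ (n+(1+t)) * (((j:ℝ)+1) / 2 ^ n) = ((2^(1+t) * (j+1) : ℕ) : ℝ) := by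
      push_cast
      rw [pow_add]
      have h2 : (2:ℝ) ^ n ≠ 0 := by positivity
      field_simp
    rw [harg, tent_nat, mul_zero]
  rw [hx, hy0, hy1, Finset.sum_range_succ, Finset.sum_range_succ, Finset.sum_range_succ]
  -- top-level terms
  have hxt : tent ((2:ℝ) ^ n * ((2 * (j:ℝ) + 1) / 2 ^ (n + 1))) = 1 := by
    have harg : (2:ℝ) ^ n * ((2 * (j:ℝ) + 1) / 2 ^ (n + 1)) = (j:ℝ) + 1/2 := by
      rw [pow_succ]
      have h2 : (2:ℝ) ^ n ≠ 0 := by positivity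
      field_simp
    rw [harg, tent_lower (j:ℤ) _ (by push_cast; linarith) (by push_cast; linarith)]
    push_cast
    ring
  have hy0t : tent ((2:ℝ) ^ n * ((j:ℝ) / 2 ^ n)) = 0 := by
    have harg : (2:ℝ) ^ n * ((j:ℝ) / 2 ^ n) = (j:ℝ) := by
      have h2 : (2:ℝ) ^ n ≠ 0 := by positivity
      field_simp
    rw [harg]; exact tent_nat j
  have hy1t : tent ((2:ℝ) ^ n * (((j:ℝ)+1) / 2 ^ n)) = 0 := by
    have harg : (2:ℝ) ^ n * (((j:ℝ)+1) / 2 ^ n) = ((j:ℝ)+1) := by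
      have h2 : (2:ℝ) ^ n ≠ 0 := by positivity
      field_simp
    rw [harg]
    have := tent_nat (j+1); push_cast at this; exact this
  -- midpoints
  have hmid : ∀ k ∈ Finset.range n,
      (1 / (2:ℝ) ^ (α * (k:ℝ))) * tent ((2:ℝ) ^ (k:ℕ) * ((2 * (j:ℝ) + 1) / 2 ^ (n + 1)))
      = (1 / (2:ℝ) ^ (α * (k:ℝ))) *
          ((tent ((2:ℝ) ^ (k:ℕ) * ((j:ℝ) / 2 ^ n))
            + tent ((2:ℝ) ^ (k:ℕ) * (((j:ℝ)+1) / 2 ^ n))) / 2) := by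
    intro k hk
    rw [Finset.mem_range] at hk
    obtain ⟨N, rfl⟩ : ∃ N, n = k + N + 1 := ⟨n-k-1, by omega⟩
    congr 1
    set a := (2:ℝ) ^ (k:ℕ) * ((j:ℝ) / 2 ^ (k+N+1)) with hadef
    set b := (2:ℝ) ^ (k:ℕ) * (((j:ℝ)+1) / 2 ^ (k+N+1)) with hbdef
    have h2k : (2:ℝ) ^ k ≠ 0 := by positivity
    have h2N : (2:ℝ) ^ (N+1) ≠ 0 := by positivity
    have hea : a = (j:ℝ) / 2 ^ (N+1) := by
      rw [hadef, pow_add, pow_add]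
      field_simp
      ring
    have heb : b = ((j:ℝ)+1) / 2 ^ (N+1) := by
      rw [hbdef, pow_add, pow_add]
      field_simp
      ring
    have hab : (2:ℝ) ^ (k:ℕ) * ((2 * (j:ℝ) + 1) / 2 ^ (k+N+1+1)) = (a+b)/2 := by
      rw [hea, heb]
      have : (2:ℝ) ^ (k+N+1+1) ≠ 0 := by positivity
      field_simp
      ring
    set s : ℕ := j / 2^N with hsdef
    have hMpos : 0 < 2^N := by positivity
    have e1 : 2^N * s + j % 2^N = j := Nat.div_add_mod j (2^N)
    have hlt : j % 2^N < 2^N := Nat.mod_lt j hMpos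
    have h1 : s * 2^N ≤ j := by
      have e2 : s * 2^N = 2^N * s := by ring
      omega
    have h2 : j + 1 ≤ (s+1) * 2^N := by
      have e2 : (s+1)*2^N = 2^N*s + 2^N := by ring
      omega
    have h1' : (s:ℝ) * 2^N ≤ (j:ℝ) := by exact_mod_cast h1
    have h2' : (j:ℝ) + 1 ≤ ((s:ℝ)+1) * 2^N := by exact_mod_cast h2
    have hNpos : (0:ℝ) < 2^(N+1) := by positivity
    have ha : ((s:ℤ):ℝ)/2 ≤ a := by
      rw [hea, div_le_div_iff₀ two_pos hNpos]
      push_cast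
      rw [pow_succ]
      nlinarith
    have hb : b ≤ (((s:ℤ):ℝ)+1)/2 := by
      rw [heb, div_le_div_iff₀ hNpos two_pos]
      push_cast
      rw [pow_succ]
      nlinarith
    have haleb : a ≤ b := by
      rw [hea, heb]
      gcongr
      linarith
    rw [hab]
    exact tent_midhalf (s:ℤ) a b ha haleb hb
  rw [Finset.sum_congr rfl hmid, hxt, hy0t, hy1t]
  have hsplit : ∑ k ∈ Finset.range n,
      (1 / (2:ℝ) ^ (α * (k:ℝ))) *
        ((tent ((2:ℝ) ^ (k:ℕ) * ((j:ℝ) / 2 ^ n))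
          + tent ((2:ℝ) ^ (k:ℕ) * (((j:ℝ)+1) / 2 ^ n))) / 2)
      = (1/2) * ((∑ k ∈ Finset.range n,
            (1 / (2:ℝ) ^ (α * (k:ℝ))) * tent ((2:ℝ) ^ (k:ℕ) * ((j:ℝ) / 2 ^ n)))
          + (∑ k ∈ Finset.range n,
            (1 / (2:ℝ) ^ (α * (k:ℝ))) * tent ((2:ℝ) ^ (k:ℕ) * (((j:ℝ)+1) / 2 ^ n)))) := by
    rw [← Finset.sum_add_distrib, Finset.mul_sum]
    exact Finset.sum_congr rfl (fun k _ => by ring)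
  rw [hsplit]
  ring
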